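/- In the badcodeword construction, let φ = (ψ1 + ψ2)/‖ψ1 + ψ2‖. Then for every e ∈ C^⊥ \ C, |⟨φ, XZ(e)φ⟩| ≤ 3/4. -/

import Mathlib

open scoped BigOperators
open Matrix

/-- `omg p` is the complex primitive `p`-th root of unity `exp(2πi/p)`. -/
noncomputable def omg (p : ℕ) : ℂ := Complex.exp (2 * Real.pi * Complex.I / p)

/-- The generalized Pauli matrix `XZ(u) = X^{a_1}Z^{b_1} ⊗ ⋯ ⊗ X^{a_n}Z^{b_n}`
for `u = ((a_1,b_1),…,(a_n,b_n)) ∈ (Z_p²)ⁿ`, written out entrywise with respect to the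
computational basis of `(ℂ^p)^{⊗n} ≃ ℂ^{p^n}`, whose coordinates are indexed by
`Fin n → ZMod p`.  (It is the matrix determined by
`XZ(u) |i₁ … iₙ⟩ = ∏_t ω^{b_t i_t} |i₁+a₁, …, iₙ+aₙ⟩`.) -/
noncomputable def XZ (p n : ℕ) (u : Fin n → ZMod p × ZMod p) :
    Matrix (Fin n → ZMod p) (Fin n → ZMod p) ℂ :=
  fun j i => ∏ t : Fin n, if j t = i t + (u t).1 then omg p ^ ((u t).2 * i t).val else 0

/-- The symplectic inner product `⟨u,v⟩ = Σ b_i c_i − a_i d_i` on `Z_p^{2n}`. -/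
def symp (p n : ℕ) (u v : Fin n → ZMod p × ZMod p) : ZMod p :=
  ∑ t : Fin n, ((u t).2 * (v t).1 - (u t).1 * (v t).2)

/-- The standard Hermitian inner product on `I → ℂ`. -/
noncomputable def cinner {I : Type*} [Fintype I] (x y : I → ℂ) : ℂ :=
  ∑ i, (starRingEnd ℂ) (x i) * y i

noncomputable def ch (p : ℕ) (a : ZMod p) : ℂ := omg p ^ a.val

lemma omg_prim (p : ℕ) [Fact p.Prime] : IsPrimitiveRoot (omg p) p := by
  have h := Complex.isPrimitiveRoot_exp p (Fact.out : p.Prime).ne_zero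
  exact h

lemma omg_pow (p : ℕ) [Fact p.Prime] : omg p ^ p = 1 := (omg_prim p).pow_eq_one

lemma ch_zero (p : ℕ) : ch p 0 = 1 := by simp [ch]

lemma pow_mod_p (p : ℕ) {z : ℂ} (hz : z ^ p = 1) (m : ℕ) : z ^ (m % p) = z ^ m := by
  conv_rhs => rw [← Nat.mod_add_div m p]
  rw [pow_add, pow_mul, hz, one_pow, mul_one]

lemma ch_add (p : ℕ) [Fact p.Prime] (a b : ZMod p) : ch p (a + b) = ch p a * ch p b := by
  haveI : NeZero p := ⟨(Fact.out : p.Prime).ne_zero⟩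
  unfold ch
  rw [ZMod.val_add, pow_mod_p p (omg_pow p), pow_add]

lemma ch_abs (p : ℕ) [Fact p.Prime] (a : ZMod p) : ‖ch p a‖ = 1 := by
  have : omg p = Complex.exp (((2 * Real.pi / p : ℝ) : ℂ) * Complex.I) := by
    unfold omg; push_cast; ring_nf
  rw [ch, norm_pow, this, Complex.norm_exp_ofReal_mul_I, one_pow]

lemma ch_eq_one_iff (p : ℕ) [Fact p.Prime] (a : ZMod p) : ch p a = 1 ↔ a = 0 := by
  haveI : NeZero p := ⟨(Fact.out : p.Prime).ne_zero⟩
  rw [ch, (omg_prim p).pow_eq_one_iff_dvd]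
  constructor
  · intro h
    have hv := ZMod.val_lt a
    have hz : a.val = 0 := Nat.eq_zero_of_dvd_of_lt h hv
    exact (ZMod.val_eq_zero a).mp hz
  · rintro rfl; simp

lemma ch_conj (p : ℕ) [Fact p.Prime] (a : ZMod p) :
    (starRingEnd ℂ) (ch p a) = ch p (-a) := by
  have h1 : ch p a * ch p (-a) = 1 := by rw [← ch_add, add_neg_cancel, ch_zero]
  have h2 : (starRingEnd ℂ) (ch p a) * ch p a = 1 := by
    have habs := ch_abs p a
    have : Complex.normSq (ch p a) = 1 := by
      rw [← Complex.sq_norm, habs, one_pow]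
    rw [mul_comm, Complex.mul_conj, this, Complex.ofReal_one]
  calc (starRingEnd ℂ) (ch p a) = (starRingEnd ℂ) (ch p a) * (ch p a * ch p (-a)) := by
        rw [h1, mul_one]
    _ = ((starRingEnd ℂ) (ch p a) * ch p a) * ch p (-a) := by ring
    _ = ch p (-a) := by rw [h2, one_mul]

lemma ch_sum (p : ℕ) [Fact p.Prime] {ι : Type*} (s : Finset ι) (f : ι → ZMod p) :
    ch p (∑ i ∈ s, f i) = ∏ i ∈ s, ch p (f i) := by
  induction s using Finset.cons_induction with
  | empty => simp [ch_zero]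
  | cons a s ha ih => rw [Finset.sum_cons, Finset.prod_cons, ch_add, ih]

def d2 (p n : ℕ) (u v : Fin n → ZMod p × ZMod p) : ZMod p := ∑ t, (u t).2 * (v t).1

lemma XZ_apply (p n : ℕ) (u : Fin n → ZMod p × ZMod p) (j i : Fin n → ZMod p) :
    XZ p n u j i =
      if j = i + fun t => (u t).1 then ∏ t, ch p ((u t).2 * i t) else 0 := by
  unfold XZ ch
  by_cases h : j = i + fun t => (u t).1
  · rw [if_pos h]
    refine Finset.prod_congr rfl fun t _ => ?_
    rw [if_pos]; exact congrFun h t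
  · rw [if_neg h]
    have : ∃ t, j t ≠ i t + (u t).1 := by
      by_contra hc; push_neg at hc; exact h (funext hc)
    obtain ⟨t, ht⟩ := this
    exact Finset.prod_eq_zero (Finset.mem_univ t) (if_neg ht)

lemma XZ_zero (p n : ℕ) : XZ p n 0 = 1 := by
  ext j i
  rw [XZ_apply, Matrix.one_apply]
  simp [ch_zero, funext_iff, eq_comm]

lemma XZ_mul (p n : ℕ) [Fact p.Prime] (u v : Fin n → ZMod p × ZMod p) :
    XZ p n u * XZ p n v = ch p (d2 p n u v) • XZ p n (u + v) := by
  ext j i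
  rw [Matrix.mul_apply, Matrix.smul_apply]
  rw [Finset.sum_eq_single (i + fun t => (v t).1)]
  · rw [XZ_apply, XZ_apply, XZ_apply, if_pos rfl]
    have hcond : (j = (i + fun t => (v t).1) + fun t => (u t).1) ↔
        (j = i + fun t => ((u + v) t).1) := by
      constructor <;> intro h <;> rw [h] <;> funext t <;>
        simp [Pi.add_apply, Prod.fst_add] <;> ring
    by_cases h : j = (i + fun t => (v t).1) + fun t => (u t).1
    · rw [if_pos h, if_pos (hcond.mp h)]
      rw [← ch_sum, ← ch_sum, ← ch_sum, smul_eq_mul, ← ch_add, ← ch_add]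
      congr 1
      simp only [Pi.add_apply, Prod.snd_add, d2]
      rw [← Finset.sum_add_distrib, ← Finset.sum_add_distrib]
      exact Finset.sum_congr rfl fun t _ => by ring
    · rw [if_neg h, if_neg (fun hc => h (hcond.mpr hc)), zero_mul, smul_zero]
  · intro m _ hm
    rw [XZ_apply p n v, if_neg, mul_zero]
    intro hc; exact hm hc
  · intro hmem; exact absurd (Finset.mem_univ _) hmem

lemma XZ_conjTranspose (p n : ℕ) [Fact p.Prime] (u : Fin n → ZMod p × ZMod p) :
    (XZ p n u)ᴴ = ch p (d2 p n u u) • XZ p n (-u) := by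
  ext j i
  rw [Matrix.conjTranspose_apply, Matrix.smul_apply, XZ_apply, XZ_apply]
  have hcond : (i = j + fun t => (u t).1) ↔ (j = i + fun t => ((-u) t).1) := by
    constructor <;> intro h <;> rw [h] <;> funext t <;>
      simp [Pi.add_apply, Prod.fst_neg] <;> ring
  by_cases h : i = j + fun t => (u t).1
  · rw [if_pos h, if_pos (hcond.mp h)]
    rw [star_prod]
    rw [show ∏ t, star (ch p ((u t).2 * j t)) = ∏ t, ch p (-((u t).2 * j t)) from
      Finset.prod_congr rfl fun t _ => ch_conj p _]
    rw [← ch_sum, ← ch_sum, smul_eq_mul, ← ch_add]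
    congr 1
    simp only [Pi.neg_apply, Prod.snd_neg, d2]
    rw [← Finset.sum_add_distrib]
    refine Finset.sum_congr rfl fun t _ => ?_
    have : i t = j t + (u t).1 := congrFun h t
    rw [this]; ring
  · rw [if_neg h, if_neg (fun hc => h (hcond.mpr hc)), smul_zero, star_zero]

section cinnerLemmas
variable {I : Type*} [Fintype I]

lemma cinner_add_left (x y z : I → ℂ) : cinner (x + y) z = cinner x z + cinner y z := by
  simp [cinner, add_mul, Finset.sum_add_distrib]

lemma cinner_add_right (x y z : I → ℂ) : cinner x (y + z) = cinner x y + cinner x z := by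
  simp [cinner, mul_add, Finset.sum_add_distrib]

lemma cinner_smul_left (a : ℂ) (x y : I → ℂ) :
    cinner (a • x) y = (starRingEnd ℂ) a * cinner x y := by
  simp [cinner, Finset.mul_sum]; ring_nf

lemma cinner_smul_right (a : ℂ) (x y : I → ℂ) : cinner x (a • y) = a * cinner x y := by
  simp [cinner, Finset.mul_sum]
  exact Finset.sum_congr rfl fun i _ => by ring

lemma cinner_sum_right {ι : Type*} (s : Finset ι) (x : I → ℂ) (f : ι → I → ℂ) :
    cinner x (∑ i ∈ s, f i) = ∑ i ∈ s, cinner x (f i) := by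
  unfold cinner
  rw [Finset.sum_comm]
  exact Finset.sum_congr rfl fun i _ => by simp [Finset.mul_sum]

lemma cinner_conj_symm (x y : I → ℂ) : cinner y x = (starRingEnd ℂ) (cinner x y) := by
  unfold cinner
  rw [map_sum]
  exact Finset.sum_congr rfl fun i _ => by simp [mul_comm]

lemma cinner_mulVec_left [DecidableEq I] (M : Matrix I I ℂ) (x y : I → ℂ) :
    cinner (M *ᵥ x) y = cinner x (Mᴴ *ᵥ y) := by
  simp only [cinner, Matrix.mulVec, dotProduct, Matrix.conjTranspose_apply, map_sum,
    _root_.map_mul, Finset.sum_mul, Finset.mul_sum, starRingEnd_apply]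
  rw [Finset.sum_comm]
  exact Finset.sum_congr rfl fun i _ => Finset.sum_congr rfl fun j _ => by ring

end cinnerLemmas

lemma XZ_unitary (p n : ℕ) [Fact p.Prime] (u : Fin n → ZMod p × ZMod p) :
    (XZ p n u)ᴴ * XZ p n u = 1 := by
  rw [XZ_conjTranspose, Matrix.smul_mul, XZ_mul, smul_smul, ← ch_add]
  have h1 : d2 p n u u + d2 p n (-u) u = 0 := by
    simp only [d2, Prod.snd_neg, Pi.neg_apply]
    rw [← Finset.sum_add_distrib]
    exact Finset.sum_eq_zero fun t _ => by ring
  rw [h1, ch_zero, neg_add_cancel, XZ_zero, one_smul]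

lemma cinner_XZ_XZ (p n : ℕ) [Fact p.Prime] (u : Fin n → ZMod p × ZMod p)
    (x y : (Fin n → ZMod p) → ℂ) :
    cinner (XZ p n u *ᵥ x) (XZ p n u *ᵥ y) = cinner x y := by
  rw [cinner_mulVec_left, Matrix.mulVec_mulVec, XZ_unitary, Matrix.one_mulVec]

lemma key_inner (p n : ℕ) [Fact p.Prime] (ψ : (Fin n → ZMod p) → ℂ)
    (u v w : Fin n → ZMod p × ZMod p) :
    cinner (XZ p n u *ᵥ ψ) (XZ p n v *ᵥ (XZ p n w *ᵥ ψ)) =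
      ch p (d2 p n v w + d2 p n u u - d2 p n u v - d2 p n u w) *
        cinner ψ (XZ p n (v + w - u) *ᵥ ψ) := by
  rw [cinner_mulVec_left, Matrix.mulVec_mulVec, Matrix.mulVec_mulVec, Matrix.mul_assoc,
    XZ_mul p n v w, Matrix.mul_smul, XZ_conjTranspose, Matrix.smul_mul, XZ_mul p n (-u) (v + w),
    smul_smul, smul_smul, ← ch_add, ← ch_add]
  have harg : -u + (v + w) = v + w - u := by abel
  have hph : d2 p n v w + d2 p n u u + d2 p n (-u) (v + w) =
      d2 p n v w + d2 p n u u - d2 p n u v - d2 p n u w := by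
    simp only [d2, Prod.snd_neg, Pi.neg_apply, Pi.add_apply, Prod.fst_add,
      ← Finset.sum_add_distrib, ← Finset.sum_sub_distrib]
    exact Finset.sum_congr rfl fun t _ => by ring
  rw [harg, hph, Matrix.smul_mulVec, cinner_smul_right]

section sympLemmas
variable (p n : ℕ)

lemma symp_anti (u v : Fin n → ZMod p × ZMod p) : symp p n u v = - symp p n v u := by
  simp only [symp, ← Finset.sum_neg_distrib]
  exact Finset.sum_congr rfl fun t _ => by ring

lemma d2_sub_symp (u v : Fin n → ZMod p × ZMod p) :
    d2 p n u v - d2 p n v u = symp p n u v := by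
  simp only [d2, symp, ← Finset.sum_sub_distrib]
  exact Finset.sum_congr rfl fun t _ => by ring

lemma symp_add_right (c u v : Fin n → ZMod p × ZMod p) :
    symp p n c (u + v) = symp p n c u + symp p n c v := by
  simp only [symp, Pi.add_apply, Prod.fst_add, Prod.snd_add, ← Finset.sum_add_distrib]
  exact Finset.sum_congr rfl fun t _ => by ring

lemma symp_sub_right (c u v : Fin n → ZMod p × ZMod p) :
    symp p n c (u - v) = symp p n c u - symp p n c v := by
  simp only [symp, Pi.sub_apply, Prod.fst_sub, Prod.snd_sub, ← Finset.sum_sub_distrib]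
  exact Finset.sum_congr rfl fun t _ => by ring

noncomputable def sympBL : LinearMap.BilinForm (ZMod p) (Fin n → ZMod p × ZMod p) :=
  LinearMap.mk₂ (ZMod p) (symp p n)
    (fun u u' v => by
      simp only [symp, Pi.add_apply, Prod.fst_add, Prod.snd_add, ← Finset.sum_add_distrib]
      exact Finset.sum_congr rfl fun t _ => by ring)
    (fun a u v => by
      simp only [symp, Pi.smul_apply, Prod.smul_fst, Prod.smul_snd, smul_eq_mul,
        Finset.mul_sum]
      exact Finset.sum_congr rfl fun t _ => by ring)
    (fun u v v' => by
      simp only [symp, Pi.add_apply, Prod.fst_add, Prod.snd_add, ← Finset.sum_add_distrib]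
      exact Finset.sum_congr rfl fun t _ => by ring)
    (fun a u v => by
      simp only [symp, Pi.smul_apply, Prod.smul_fst, Prod.smul_snd, smul_eq_mul,
        Finset.mul_sum]
      exact Finset.sum_congr rfl fun t _ => by ring)

lemma sympBL_apply (u v : Fin n → ZMod p × ZMod p) : sympBL p n u v = symp p n u v := rfl

lemma sympBL_refl : (sympBL p n).IsRefl := by
  intro u v h
  rw [sympBL_apply] at *
  rw [symp_anti, h, neg_zero]

lemma symp_single (m : Fin n → ZMod p × ZMod p) (t : Fin n) (c : ZMod p × ZMod p) :
    symp p n m (Pi.single t c) = (m t).2 * c.1 - (m t).1 * c.2 := by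
  unfold symp
  rw [Finset.sum_eq_single t]
  · rw [Pi.single_eq_same]
  · intro s _ hs
    rw [Pi.single_eq_of_ne hs]
    simp
  · intro h; exact absurd (Finset.mem_univ _) h

lemma sympBL_nondeg [Fact p.Prime] : (sympBL p n).Nondegenerate := by
  refine (LinearMap.IsRefl.nondegenerate_iff_separatingLeft (sympBL_refl p n)).mpr ?_
  intro m hm
  funext t
  have h1 := hm (Pi.single t (0, -1))
  have h2 := hm (Pi.single t (1, 0))
  rw [sympBL_apply, symp_single] at h1 h2
  simp only [mul_zero, mul_one, mul_neg, zero_sub, neg_neg, sub_zero] at h1 h2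
  rw [Pi.zero_apply]
  exact Prod.ext h1 h2

lemma cinner_sum_left {I : Type*} [Fintype I] {ι : Type*} (s : Finset ι)
    (f : ι → I → ℂ) (y : I → ℂ) :
    cinner (∑ i ∈ s, f i) y = ∑ i ∈ s, cinner (f i) y := by
  unfold cinner
  rw [Finset.sum_comm]
  exact Finset.sum_congr rfl fun i _ => by simp [Finset.sum_mul]

lemma mulVec_finset_sum {I : Type*} [Fintype I] [DecidableEq I] {ι : Type*}
    (M : Matrix I I ℂ) (s : Finset ι) (f : ι → I → ℂ) :
    M *ᵥ (∑ i ∈ s, f i) = ∑ i ∈ s, M *ᵥ f i := by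
  simp only [← Matrix.mulVecLin_apply, map_sum]

lemma d2_zero_left (p n : ℕ) (v : Fin n → ZMod p × ZMod p) : d2 p n 0 v = 0 := by
  simp [d2]

lemma d2_zero_right (p n : ℕ) (v : Fin n → ZMod p × ZMod p) : d2 p n v 0 = 0 := by
  simp [d2]

set_option maxHeartbeats 2000000 in
/-- In the badcodeword construction, the normalized vector
`φ = (ψ1 + ψ2)/‖ψ1 + ψ2‖` satisfies `|⟨φ, XZ(e)φ⟩| ≤ 3/4` for every
`e ∈ C^⊥ \ C`. -/
theorem badcodeword_bound (p n k : ℕ) [Fact p.Prime]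
    (C Cmax : Submodule (ZMod p) (Fin n → ZMod p × ZMod p))
    (hkn : k ≤ n)
    (hdimC : Module.finrank (ZMod p) C = n - k)
    (hCself : ∀ u ∈ C, ∀ c ∈ C, symp p n c u = 0)
    (hCsub : C ≤ Cmax)
    (hsub : ∀ u ∈ Cmax, ∀ c ∈ C, symp p n c u = 0)
    (hmax : ∀ u, u ∈ Cmax ↔ ∀ c ∈ Cmax, symp p n c u = 0)
    (ψ1 : (Fin n → ZMod p) → ℂ) (hψ1 : cinner ψ1 ψ1 = 1)
    (heig : ∀ c ∈ Cmax, ∃ lam : ℂ, XZ p n c *ᵥ ψ1 = lam • ψ1)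
    (R : Finset (Fin n → ZMod p × ZMod p)) (h0R : 0 ∈ R)
    (hRsub : ∀ x ∈ R, ∀ c ∈ C, symp p n c x = 0)
    (hRrep : ∀ v : Fin n → ZMod p × ZMod p, (∀ c ∈ C, symp p n c v = 0) →
      ∃! x, x ∈ R ∧ v - x ∈ Cmax)
    (ψ2 : (Fin n → ZMod p) → ℂ)
    (hψ2 : ψ2 = ((Real.sqrt (p ^ k) : ℝ) : ℂ)⁻¹ • ∑ x ∈ R, XZ p n x *ᵥ ψ1)
    (φ : (Fin n → ZMod p) → ℂ)
    (hφ : φ = ((Real.sqrt ((cinner (ψ1 + ψ2) (ψ1 + ψ2)).re) : ℝ) : ℂ)⁻¹ • (ψ1 + ψ2))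
    (e : Fin n → ZMod p × ZMod p) (he : ∀ c ∈ C, symp p n c e = 0) (heC : e ∉ C) :
    ‖cinner φ (XZ p n e *ᵥ φ)‖ ≤ 3 / 4 := by
  haveI : NeZero p := ⟨(Fact.out : p.Prime).ne_zero⟩
  have hp1 : (1:ℝ) ≤ (p:ℝ) := by exact_mod_cast (Fact.out : p.Prime).one_lt.le
  have hpk1 : (1:ℝ) ≤ (p:ℝ) ^ k := one_le_pow₀ hp1
  set t : ℝ := (Real.sqrt ((p:ℝ) ^ k))⁻¹ with ht_def
  have hsq1 : (1:ℝ) ≤ Real.sqrt ((p:ℝ) ^ k) := by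
    rw [show (1:ℝ) = Real.sqrt 1 from (Real.sqrt_one).symm]
    exact Real.sqrt_le_sqrt hpk1
  have ht0 : 0 < t := by positivity
  have ht1 : t ≤ 1 := by
    rw [ht_def, inv_le_one_iff₀]; right; exact hsq1
  have ht2 : t ^ 2 * (p:ℝ) ^ k = 1 := by
    rw [ht_def, inv_pow, Real.sq_sqrt (by linarith : (0:ℝ) ≤ (p:ℝ) ^ k)]
    exact inv_mul_cancel₀ (by linarith)
  -- linear algebra
  set B := sympBL p n with hB_def
  have hBrefl : B.IsRefl := sympBL_refl p n
  have hBnd : B.Nondegenerate := sympBL_nondeg p n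
  have hV : Module.finrank (ZMod p) (Fin n → ZMod p × ZMod p) = 2 * n := by
    rw [Module.finrank_pi_fintype, Finset.sum_const, Finset.card_univ, Fintype.card_fin]
    rw [Module.finrank_prod, Module.finrank_self]
    ring
  set Cperp := B.orthogonal C with hCperp_def
  have hmemperp : ∀ u, u ∈ Cperp ↔ ∀ c ∈ C, symp p n c u = 0 := by
    intro u
    rw [hCperp_def, LinearMap.BilinForm.mem_orthogonal_iff]
    rfl
  have hCmaxperp : Cmax = B.orthogonal Cmax := by
    ext u
    rw [LinearMap.BilinForm.mem_orthogonal_iff, hmax]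
    rfl
  have hfrle : Module.finrank (ZMod p) Cmax ≤ 2 * n := hV ▸ Submodule.finrank_le Cmax
  have hfrCle : Module.finrank (ZMod p) C ≤ 2 * n := hV ▸ Submodule.finrank_le C
  have hfrCmax : Module.finrank (ZMod p) Cmax = n := by
    have h := LinearMap.BilinForm.finrank_orthogonal hBnd Cmax
    rw [← hCmaxperp, hV] at h
    omega
  have hfrCperp : Module.finrank (ZMod p) Cperp = n + k := by
    have h := LinearMap.BilinForm.finrank_orthogonal hBnd C
    rw [hV, hdimC] at h
    rw [hCperp_def, h]
    omega
  haveI : Fintype ↥Cperp := Fintype.ofFinite _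
  haveI : Fintype ↥Cmax := Fintype.ofFinite _
  have hcardCmax : Fintype.card ↥Cmax = p ^ n := by
    rw [Module.card_eq_pow_finrank (K := ZMod p), ZMod.card, hfrCmax]
  have hcardCperp : Fintype.card ↥Cperp = p ^ (n + k) := by
    rw [Module.card_eq_pow_finrank (K := ZMod p), ZMod.card, hfrCperp]
  have hRperp : ∀ x ∈ R, x ∈ Cperp := fun x hx => (hmemperp x).mpr (hRsub x hx)
  have hCmaxperp' : Cmax ≤ Cperp := fun u hu => (hmemperp u).mpr (hsub u hu)
  have hRinj : ∀ x ∈ R, ∀ y ∈ R, x - y ∈ Cmax → x = y := by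
    intro x hx y hy hxy
    obtain ⟨z, _, huniq⟩ := hRrep x (hRsub x hx)
    have h1 : x = z := huniq x ⟨hx, by rw [sub_self]; exact Submodule.zero_mem _⟩
    have h2 : y = z := huniq y ⟨hy, hxy⟩
    rw [h1, h2]
  have hR0 : ∀ x ∈ R, x ∈ Cmax → x = 0 := by
    intro x hx hxm
    exact hRinj x hx 0 h0R (by rwa [sub_zero])
  have hcardR : R.card = p ^ k := by
    have hf : ∀ q : {x // x ∈ R} × ↥Cmax, (q.1.val + q.2.val) ∈ Cperp := by
      intro q
      exact Submodule.add_mem _ (hRperp _ q.1.2) (hCmaxperp' q.2.2)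
    let f : {x // x ∈ R} × ↥Cmax → ↥Cperp := fun q => ⟨q.1.val + q.2.val, hf q⟩
    have hfbij : Function.Bijective f := by
      constructor
      · rintro ⟨⟨x, hx⟩, ⟨c, hc⟩⟩ ⟨⟨x', hx'⟩, ⟨c', hc'⟩⟩ hEq
        have hsum : x + c = x' + c' := congrArg Subtype.val hEq
        have hxx' : x - x' ∈ Cmax := by
          have : x - x' = c' - c := by
            have := hsum
            abel_nf
            abel_nf at this
            linear_combination (norm := abel) this
          rw [this]
          exact Submodule.sub_mem _ hc' hc
        have hxeq : x = x' := hRinj x hx x' hx' hxx'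
        subst hxeq
        have : c = c' := by
          have := hsum
          exact add_left_cancel this
        simp [this]
      · rintro ⟨v, hv⟩
        obtain ⟨x, ⟨hxR, hxC⟩, _⟩ := hRrep v ((hmemperp v).mp hv)
        refine ⟨⟨⟨x, hxR⟩, ⟨v - x, hxC⟩⟩, ?_⟩
        apply Subtype.ext
        show x + (v - x) = v
        abel
    have hcards := Fintype.card_congr (Equiv.ofBijective f hfbij)
    rw [Fintype.card_prod, Fintype.card_coe, hcardCmax, hcardCperp, pow_add] at hcards
    have hpn : 0 < p ^ n := Nat.pow_pos (Fact.out : p.Prime).pos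
    rw [Nat.mul_comm (p ^ n) (p ^ k)] at hcards
    exact Nat.eq_of_mul_eq_mul_right hpn hcards
  -- spectral facts
  have heigabs : ∀ c ∈ Cmax, ∃ lam : ℂ, (XZ p n c *ᵥ ψ1 = lam • ψ1) ∧
      (starRingEnd ℂ) lam * lam = 1 := by
    intro c hc
    obtain ⟨lam, hlam⟩ := heig c hc
    refine ⟨lam, hlam, ?_⟩
    have h := cinner_XZ_XZ p n c ψ1 ψ1
    rw [hlam, cinner_smul_right, cinner_smul_left, hψ1, mul_one] at h
    linear_combination h
  have hiporth : ∀ v, v ∉ Cmax → cinner ψ1 (XZ p n v *ᵥ ψ1) = 0 := by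
    intro v hv
    have hex : ∃ c ∈ Cmax, symp p n c v ≠ 0 := by
      by_contra hcon; push_neg at hcon; exact hv ((hmax v).mpr hcon)
    obtain ⟨c, hc, hs⟩ := hex
    obtain ⟨lam, hlam, hunit⟩ := heigabs c hc
    have hk := key_inner p n ψ1 c v c
    rw [hlam, Matrix.mulVec_smul, cinner_smul_right, cinner_smul_left] at hk
    have harg : v + c - c = v := by abel
    rw [harg] at hk
    have hph : d2 p n v c + d2 p n c c - d2 p n c v - d2 p n c c = symp p n v c := by
      rw [← d2_sub_symp]; ring
    rw [hph] at hk
    have hipv : (ch p (symp p n v c) - 1) * cinner ψ1 (XZ p n v *ᵥ ψ1) = 0 := by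
      have h1 : cinner ψ1 (XZ p n v *ᵥ ψ1) =
          ch p (symp p n v c) * cinner ψ1 (XZ p n v *ᵥ ψ1) := by
        calc cinner ψ1 (XZ p n v *ᵥ ψ1)
            = ((starRingEnd ℂ) lam * lam) * cinner ψ1 (XZ p n v *ᵥ ψ1) := by
              rw [hunit, one_mul]
          _ = ch p (symp p n v c) * cinner ψ1 (XZ p n v *ᵥ ψ1) := by
              rw [← hk]; ring
      linear_combination -h1
    have hch : ch p (symp p n v c) - 1 ≠ 0 := by
      rw [sub_ne_zero]
      intro hone
      have h0 : symp p n v c = 0 := (ch_eq_one_iff p _).mp hone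
      rw [symp_anti, h0, neg_zero] at hs
      exact hs rfl
    rcases mul_eq_zero.mp hipv with h | h
    · exact absurd h hch
    · exact h
  have hipCmax : ∀ c ∈ Cmax, ‖cinner ψ1 (XZ p n c *ᵥ ψ1)‖ = 1 := by
    intro c hc
    obtain ⟨lam, hlam, hunit⟩ := heigabs c hc
    have hipc : cinner ψ1 (XZ p n c *ᵥ ψ1) = lam := by
      rw [hlam, cinner_smul_right, hψ1, mul_one]
    rw [hipc]
    have h1 : Complex.normSq lam = 1 := by
      have h2 : ((Complex.normSq lam : ℝ) : ℂ) = 1 := by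
        rw [Complex.normSq_eq_conj_mul_self]; exact hunit
      exact_mod_cast h2
    rw [Complex.norm_def, h1, Real.sqrt_one]
  have hipbound : ∀ v, ‖cinner ψ1 (XZ p n v *ᵥ ψ1)‖ ≤ 1 := by
    intro v
    by_cases hv : v ∈ Cmax
    · exact le_of_eq (hipCmax v hv)
    · rw [hiporth v hv]; simp
  -- rewrite ψ2 with t
  have hψ2' : ψ2 = ((t : ℝ) : ℂ) • ∑ x ∈ R, XZ p n x *ᵥ ψ1 := by
    rw [hψ2, ht_def, Complex.ofReal_inv]
  -- pairwise inner products
  have hpair : ∀ x y : Fin n → ZMod p × ZMod p,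
      cinner (XZ p n x *ᵥ ψ1) (XZ p n y *ᵥ ψ1) =
        ch p (d2 p n x x - d2 p n x y) * cinner ψ1 (XZ p n (y - x) *ᵥ ψ1) := by
    intro x y
    have hk := key_inner p n ψ1 x y 0
    rw [XZ_zero, Matrix.one_mulVec] at hk
    rw [show y + (0 : Fin n → ZMod p × ZMod p) - x = y - x by abel] at hk
    rw [show d2 p n y 0 + d2 p n x x - d2 p n x y - d2 p n x 0 =
        d2 p n x x - d2 p n x y by rw [d2_zero_right, d2_zero_right]; ring] at hk
    exact hk
  have habs_t : ‖((t : ℝ) : ℂ)‖ = t := by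
    rw [Complex.norm_real, Real.norm_eq_abs, abs_of_pos ht0]
  -- ⟨ψ1, ψ2⟩
  have h12 : cinner ψ1 ψ2 = ((t : ℝ) : ℂ) := by
    rw [hψ2', cinner_smul_right, cinner_sum_right]
    rw [Finset.sum_eq_single_of_mem 0 h0R]
    · rw [XZ_zero, Matrix.one_mulVec, hψ1, mul_one]
    · intro x hx hx0
      exact hiporth x (fun hm => hx0 (hR0 x hx hm))
  have h21 : cinner ψ2 ψ1 = ((t : ℝ) : ℂ) := by
    rw [cinner_conj_symm ψ1 ψ2, h12, Complex.conj_ofReal]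
  have h22 : cinner ψ2 ψ2 = 1 := by
    rw [hψ2', cinner_smul_right, cinner_smul_left, cinner_sum_left]
    have hin : ∀ x ∈ R, cinner (XZ p n x *ᵥ ψ1) (∑ y ∈ R, XZ p n y *ᵥ ψ1) = 1 := by
      intro x hx
      rw [cinner_sum_right, Finset.sum_eq_single_of_mem x hx]
      · rw [cinner_XZ_XZ, hψ1]
      · intro y hy hyx
        rw [hpair]
        have : y - x ∉ Cmax := fun hm => hyx (hRinj y hy x hx hm)
        rw [hiporth _ this, mul_zero]
    rw [Finset.sum_congr rfl hin, Finset.sum_const, hcardR, nsmul_eq_mul, mul_one,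
      Complex.conj_ofReal]
    have hcast : ((t ^ 2 * (p:ℝ) ^ k : ℝ) : ℂ) = ((1 : ℝ) : ℂ) := by rw [ht2]
    push_cast at hcast ⊢
    linear_combination hcast
  have hden : cinner (ψ1 + ψ2) (ψ1 + ψ2) = 2 + 2 * ((t : ℝ) : ℂ) := by
    rw [cinner_add_left, cinner_add_right, cinner_add_right, hψ1, h12, h21, h22]
    ring
  -- expansion of numerator terms
  have hA12 : cinner ψ1 (XZ p n e *ᵥ ψ2) =
      ((t:ℝ):ℂ) * ∑ x ∈ R, cinner ψ1 (XZ p n e *ᵥ (XZ p n x *ᵥ ψ1)) := by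
    rw [hψ2', Matrix.mulVec_smul, cinner_smul_right, mulVec_finset_sum, cinner_sum_right]
  have hA21 : cinner ψ2 (XZ p n e *ᵥ ψ1) =
      ((t:ℝ):ℂ) * ∑ x ∈ R, cinner (XZ p n x *ᵥ ψ1) (XZ p n e *ᵥ ψ1) := by
    rw [hψ2', cinner_smul_left, Complex.conj_ofReal, cinner_sum_left]
  have hA22 : cinner ψ2 (XZ p n e *ᵥ ψ2) =
      ((t:ℝ):ℂ) * (((t:ℝ):ℂ) *
        ∑ x ∈ R, ∑ y ∈ R, cinner (XZ p n x *ᵥ ψ1) (XZ p n e *ᵥ (XZ p n y *ᵥ ψ1))) := by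
    rw [hψ2', Matrix.mulVec_smul, mulVec_finset_sum, cinner_smul_left, cinner_smul_right,
      Complex.conj_ofReal, cinner_sum_left]
    congr 2
    exact Finset.sum_congr rfl fun x _ => cinner_sum_right _ _ _
  have hNsplit : cinner (ψ1 + ψ2) (XZ p n e *ᵥ (ψ1 + ψ2)) =
      cinner ψ1 (XZ p n e *ᵥ ψ1) + cinner ψ1 (XZ p n e *ᵥ ψ2) +
      cinner ψ2 (XZ p n e *ᵥ ψ1) + cinner ψ2 (XZ p n e *ᵥ ψ2) := by
    rw [Matrix.mulVec_add, cinner_add_left, cinner_add_right, cinner_add_right]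
    ring
  -- generic filtered bound
  classical
  have hfilter : ∀ g : (Fin n → ZMod p × ZMod p) → (Fin n → ZMod p × ZMod p),
      (∀ x ∈ R, ∀ y ∈ R, g x ∈ Cmax → g y ∈ Cmax → x = y) →
      ∑ x ∈ R, ‖cinner ψ1 (XZ p n (g x) *ᵥ ψ1)‖ ≤ 1 := by
    intro g hg
    calc ∑ x ∈ R, ‖cinner ψ1 (XZ p n (g x) *ᵥ ψ1)‖
        ≤ ∑ x ∈ R, (if g x ∈ Cmax then (1:ℝ) else 0) := by
          refine Finset.sum_le_sum fun x hx => ?_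
          by_cases hm : g x ∈ Cmax
          · rw [if_pos hm]; exact hipbound _
          · rw [if_neg hm, hiporth _ hm]; simp
      _ = ((R.filter fun x => g x ∈ Cmax).card : ℝ) := by rw [Finset.sum_boole]
      _ ≤ 1 := by
          have h1 : (R.filter fun x => g x ∈ Cmax).card ≤ 1 := by
            refine Finset.card_le_one.mpr fun a ha b hb => ?_
            rw [Finset.mem_filter] at ha hb
            exact hg a ha.1 b hb.1 ha.2 hb.2
          exact_mod_cast h1
  have habs12 : ‖cinner ψ1 (XZ p n e *ᵥ ψ2)‖ ≤ t := by
    rw [hA12, norm_mul, habs_t]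
    have hterm : ∀ x ∈ R, ‖cinner ψ1 (XZ p n e *ᵥ (XZ p n x *ᵥ ψ1))‖ =
        ‖cinner ψ1 (XZ p n (e + x) *ᵥ ψ1)‖ := by
      intro x _
      have hk := key_inner p n ψ1 0 e x
      rw [XZ_zero, Matrix.one_mulVec, show e + x - 0 = e + x by abel] at hk
      rw [hk, norm_mul, ch_abs, one_mul]
    have hb : ‖∑ x ∈ R, cinner ψ1 (XZ p n e *ᵥ (XZ p n x *ᵥ ψ1))‖ ≤ 1 := by
      refine le_trans (norm_sum_le _ _) ?_
      rw [Finset.sum_congr rfl hterm]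
      refine hfilter (fun x => e + x) fun a ha b hb hma hmb => ?_
      refine hRinj a ha b hb ?_
      have : a - b = (e + a) - (e + b) := by abel
      rw [this]
      exact Submodule.sub_mem _ hma hmb
    calc t * ‖∑ x ∈ R, cinner ψ1 (XZ p n e *ᵥ (XZ p n x *ᵥ ψ1))‖
        ≤ t * 1 := mul_le_mul_of_nonneg_left hb ht0.le
      _ = t := mul_one t
  have habs21 : ‖cinner ψ2 (XZ p n e *ᵥ ψ1)‖ ≤ t := by
    rw [hA21, norm_mul, habs_t]
    have hterm : ∀ x ∈ R, ‖cinner (XZ p n x *ᵥ ψ1) (XZ p n e *ᵥ ψ1)‖ =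
        ‖cinner ψ1 (XZ p n (e - x) *ᵥ ψ1)‖ := by
      intro x _
      have hk := key_inner p n ψ1 x e 0
      rw [XZ_zero, Matrix.one_mulVec, show e + 0 - x = e - x by abel] at hk
      rw [hk, norm_mul, ch_abs, one_mul]
    have hb : ‖∑ x ∈ R, cinner (XZ p n x *ᵥ ψ1) (XZ p n e *ᵥ ψ1)‖ ≤ 1 := by
      refine le_trans (norm_sum_le _ _) ?_
      rw [Finset.sum_congr rfl hterm]
      refine hfilter (fun x => e - x) fun a ha b hb hma hmb => ?_
      refine (hRinj b hb a ha ?_).symm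
      have : b - a = (e - a) - (e - b) := by abel
      rw [this]
      exact Submodule.sub_mem _ hma hmb
    calc t * ‖∑ x ∈ R, cinner (XZ p n x *ᵥ ψ1) (XZ p n e *ᵥ ψ1)‖
        ≤ t * 1 := mul_le_mul_of_nonneg_left hb ht0.le
      _ = t := mul_one t
  -- bound on the numerator
  have hNb : ‖cinner (ψ1 + ψ2) (XZ p n e *ᵥ (ψ1 + ψ2))‖ ≤ 1 + 2 * t := by
    by_cases hem : e ∈ Cmax
    -- Case A : e ∈ Cmax \ C
    · have hEzero : ∀ c ∈ Cmax, symp p n e c = 0 := fun c hc => (hmax c).mp hc e hem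
      have hA22zero : cinner ψ2 (XZ p n e *ᵥ ψ2) = 0 := by
        rw [hA22]
        have hdiag : ∀ x ∈ R, ∑ y ∈ R, cinner (XZ p n x *ᵥ ψ1) (XZ p n e *ᵥ (XZ p n y *ᵥ ψ1))
            = ch p (symp p n e x) * cinner ψ1 (XZ p n e *ᵥ ψ1) := by
          intro x hx
          rw [Finset.sum_eq_single_of_mem x hx]
          · have hk := key_inner p n ψ1 x e x
            rw [show e + x - x = e by abel] at hk
            rw [hk, show d2 p n e x + d2 p n x x - d2 p n x e - d2 p n x x
              = symp p n e x by rw [← d2_sub_symp]; ring]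
          · intro y hy hyx
            have hk := key_inner p n ψ1 x e y
            rw [hk]
            have hnm : e + y - x ∉ Cmax := by
              intro hm
              have h2 : y - x ∈ Cmax := by
                have h3 := Submodule.sub_mem _ hm hem
                rwa [show e + y - x - e = y - x by abel] at h3
              exact hyx (hRinj y hy x hx h2)
            rw [hiporth _ hnm, mul_zero]
        rw [Finset.sum_congr rfl hdiag, ← Finset.sum_mul]
        have hx0 : ∃ x₀ ∈ Cperp, symp p n e x₀ ≠ 0 := by
          by_contra hcon
          push_neg at hcon
          have hemem : e ∈ B.orthogonal Cperp := by
            intro x hxp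
            show sympBL p n x e = 0
            rw [sympBL_apply, symp_anti, hcon x hxp, neg_zero]
          rw [hCperp_def, LinearMap.BilinForm.orthogonal_orthogonal hBnd hBrefl C] at hemem
          exact heC hemem
        obtain ⟨x₀, hx₀p, hs₀⟩ := hx0
        have hmemRprop : ∀ x ∈ R, ∀ c ∈ C, symp p n c (x + x₀) = 0 := fun x hx c hc => by
          rw [symp_add_right, hRsub x hx c hc, (hmemperp x₀).mp hx₀p c hc, add_zero]
        have hσ : ∀ x ∈ R, ∃ z, z ∈ R ∧ x + x₀ - z ∈ Cmax :=
          fun x hx => (hRrep (x + x₀) (hmemRprop x hx)).exists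
        have hperm : ∑ x ∈ R, ch p (symp p n e x + symp p n e x₀)
            = ∑ x ∈ R, ch p (symp p n e x) := by
          refine Finset.sum_bij (fun x hx => (hσ x hx).choose) ?_ ?_ ?_ ?_
          · intro x hx; exact (hσ x hx).choose_spec.1
          · intro x hx y hy hEq
            have h1 := (hσ x hx).choose_spec.2
            have h2 := (hσ y hy).choose_spec.2
            rw [hEq] at h1
            have h3 : x - y ∈ Cmax := by
              have h4 := Submodule.sub_mem _ h1 h2
              rwa [show x + x₀ - (hσ y hy).choose - (y + x₀ - (hσ y hy).choose) = x - y
                by abel] at h4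
            exact hRinj x hx y hy h3
          · intro b hb
            have hbprop : ∀ c ∈ C, symp p n c (b - x₀) = 0 := fun c hc => by
              rw [symp_sub_right, hRsub b hb c hc, (hmemperp x₀).mp hx₀p c hc, sub_zero]
            obtain ⟨a, ⟨haR, haC⟩, _⟩ := hRrep (b - x₀) hbprop
            refine ⟨a, haR, ?_⟩
            have h1 := (hσ a haR).choose_spec.2
            have h2 : a + x₀ - b ∈ Cmax := by
              have h3 := Submodule.neg_mem _ haC
              rwa [show -(b - x₀ - a) = a + x₀ - b by abel] at h3
            have h4 : (hσ a haR).choose - b ∈ Cmax := by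
              have h5 := Submodule.sub_mem _ h2 h1
              rwa [show a + x₀ - b - (a + x₀ - (hσ a haR).choose)
                = (hσ a haR).choose - b by abel] at h5
            exact hRinj _ (hσ a haR).choose_spec.1 b hb h4
          · intro x hx
            have h1 := (hσ x hx).choose_spec.2
            congr 1
            have h2 : symp p n e (x + x₀ - (hσ x hx).choose) = 0 := hEzero _ h1
            rw [symp_sub_right, symp_add_right] at h2
            linear_combination h2
        have hgeom : (∑ x ∈ R, ch p (symp p n e x)) = 0 := by
          have h1 : ∀ x ∈ R, ch p (symp p n e x + symp p n e x₀)
              = ch p (symp p n e x) * ch p (symp p n e x₀) := fun x _ => ch_add p _ _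
          rw [Finset.sum_congr rfl h1, ← Finset.sum_mul] at hperm
          have h2 : (∑ x ∈ R, ch p (symp p n e x)) * (ch p (symp p n e x₀) - 1) = 0 := by
            linear_combination hperm
          rcases mul_eq_zero.mp h2 with h | h
          · exact h
          · exfalso
            rw [sub_eq_zero] at h
            exact hs₀ ((ch_eq_one_iff p _).mp h)
        rw [hgeom, zero_mul, mul_zero, mul_zero]
      calc ‖cinner (ψ1 + ψ2) (XZ p n e *ᵥ (ψ1 + ψ2))‖
          ≤ ‖cinner ψ1 (XZ p n e *ᵥ ψ1)‖ + ‖cinner ψ1 (XZ p n e *ᵥ ψ2)‖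
            + ‖cinner ψ2 (XZ p n e *ᵥ ψ1)‖
            + ‖cinner ψ2 (XZ p n e *ᵥ ψ2)‖ := by
            rw [hNsplit]
            refine le_trans (norm_add_le _ _) ?_
            refine add_le_add ?_ le_rfl
            refine le_trans (norm_add_le _ _) ?_
            exact add_le_add (norm_add_le _ _) le_rfl
        _ ≤ 1 + t + t + 0 := by
            refine add_le_add (add_le_add (add_le_add (hipbound e) habs12) habs21) ?_
            rw [hA22zero]; simp
        _ ≤ 1 + 2 * t := by linarith
    -- Case B : e ∉ Cmax
    · have hA11zero : cinner ψ1 (XZ p n e *ᵥ ψ1) = 0 := hiporth e hem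
      have habs22 : ‖cinner ψ2 (XZ p n e *ᵥ ψ2)‖ ≤ 1 := by
        rw [hA22]
        rw [norm_mul, norm_mul, habs_t]
        have hinner : ∀ y ∈ R,
            ‖∑ x ∈ R, cinner (XZ p n x *ᵥ ψ1) (XZ p n e *ᵥ (XZ p n y *ᵥ ψ1))‖ ≤ 1 := by
          intro y hy
          refine le_trans (norm_sum_le _ _) ?_
          have hterm : ∀ x ∈ R,
              ‖cinner (XZ p n x *ᵥ ψ1) (XZ p n e *ᵥ (XZ p n y *ᵥ ψ1))‖
              = ‖cinner ψ1 (XZ p n (e + y - x) *ᵥ ψ1)‖ := by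
            intro x _
            rw [key_inner p n ψ1 x e y, norm_mul, ch_abs, one_mul]
          rw [Finset.sum_congr rfl hterm]
          refine hfilter (fun x => e + y - x) fun a ha b hb hma hmb => ?_
          refine (hRinj b hb a ha ?_).symm
          have h1 : b - a = (e + y - a) - (e + y - b) := by abel
          rw [h1]
          exact Submodule.sub_mem _ hma hmb
        have hswap : ∑ x ∈ R, ∑ y ∈ R, cinner (XZ p n x *ᵥ ψ1) (XZ p n e *ᵥ (XZ p n y *ᵥ ψ1))
            = ∑ y ∈ R, ∑ x ∈ R, cinner (XZ p n x *ᵥ ψ1) (XZ p n e *ᵥ (XZ p n y *ᵥ ψ1)) :=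
          Finset.sum_comm
        rw [hswap]
        have houter : ‖∑ y ∈ R, ∑ x ∈ R,
            cinner (XZ p n x *ᵥ ψ1) (XZ p n e *ᵥ (XZ p n y *ᵥ ψ1))‖ ≤ (R.card : ℝ) := by
          refine le_trans (norm_sum_le _ _) ?_
          calc ∑ y ∈ R, ‖∑ x ∈ R,
                cinner (XZ p n x *ᵥ ψ1) (XZ p n e *ᵥ (XZ p n y *ᵥ ψ1))‖
              ≤ ∑ _y ∈ R, (1:ℝ) := Finset.sum_le_sum hinner
            _ = (R.card : ℝ) := by rw [Finset.sum_const, nsmul_eq_mul, mul_one]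
        calc t * (t * ‖∑ y ∈ R, ∑ x ∈ R,
              cinner (XZ p n x *ᵥ ψ1) (XZ p n e *ᵥ (XZ p n y *ᵥ ψ1))‖)
            ≤ t * (t * (R.card : ℝ)) := by
              refine mul_le_mul_of_nonneg_left ?_ ht0.le
              exact mul_le_mul_of_nonneg_left houter ht0.le
          _ = t ^ 2 * (p:ℝ) ^ k := by rw [hcardR]; push_cast; ring
          _ = 1 := ht2
      calc ‖cinner (ψ1 + ψ2) (XZ p n e *ᵥ (ψ1 + ψ2))‖
          ≤ ‖cinner ψ1 (XZ p n e *ᵥ ψ1)‖ + ‖cinner ψ1 (XZ p n e *ᵥ ψ2)‖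
            + ‖cinner ψ2 (XZ p n e *ᵥ ψ1)‖
            + ‖cinner ψ2 (XZ p n e *ᵥ ψ2)‖ := by
            rw [hNsplit]
            refine le_trans (norm_add_le _ _) ?_
            refine add_le_add ?_ le_rfl
            refine le_trans (norm_add_le _ _) ?_
            exact add_le_add (norm_add_le _ _) le_rfl
        _ ≤ 0 + t + t + 1 := by
            refine add_le_add (add_le_add (add_le_add ?_ habs12) habs21) habs22
            rw [hA11zero]; simp
        _ ≤ 1 + 2 * t := by linarith
  -- final assembly
  have hre : (cinner (ψ1 + ψ2) (ψ1 + ψ2)).re = 2 + 2 * t := by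
    rw [hden, show (2 + 2 * ((t:ℝ):ℂ)) = (((2 + 2 * t : ℝ)):ℂ) by push_cast; ring,
      Complex.ofReal_re]
  have h2t0 : (0:ℝ) < 2 + 2 * t := by linarith
  set r : ℝ := Real.sqrt ((cinner (ψ1 + ψ2) (ψ1 + ψ2)).re) with hr_def
  have hr0 : 0 ≤ r := Real.sqrt_nonneg _
  have hrr : r * r = 2 + 2 * t := by
    rw [hr_def, hre, Real.mul_self_sqrt h2t0.le]
  have hφinner : cinner φ (XZ p n e *ᵥ φ)
      = ((r:ℂ))⁻¹ * (((r:ℂ))⁻¹ * cinner (ψ1 + ψ2) (XZ p n e *ᵥ (ψ1 + ψ2))) := by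
    rw [hφ, Matrix.mulVec_smul, cinner_smul_left, cinner_smul_right, map_inv₀,
      Complex.conj_ofReal]
  rw [hφinner]
  rw [norm_mul, norm_mul, norm_inv, Complex.norm_real, Real.norm_eq_abs, abs_of_nonneg hr0]
  have hrpos : 0 < r := by
    have h1 : 0 < r * r := by rw [hrr]; linarith
    exact lt_of_le_of_ne hr0 (Ne.symm (mul_self_pos.mp h1))
  rw [show r⁻¹ * (r⁻¹ * ‖cinner (ψ1 + ψ2) (XZ p n e *ᵥ (ψ1 + ψ2))‖)
      = ‖cinner (ψ1 + ψ2) (XZ p n e *ᵥ (ψ1 + ψ2))‖ / (r * r) by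
    field_simp]
  rw [hrr, div_le_iff₀ h2t0]
  linarith [hNb, ht1]
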